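/- For any N, L, d ∈ ℕ+, set K = ⌊N^{1/d}⌋²·⌊L^{2/d}⌋. Then for any δ ∈ (0, 1/(3K)], there exists a function φ : ℝ → ℝ implemented by a ReLU FNN with width at most 4⌊N^{1/d}⌋ + 3 and depth at most 4L + 5 such that φ(x) = k for every x ∈ [k/K, (k+1)/K − δ·1_{{k ≤ K−2}}] and every k ∈ {0, 1, …, K−1} (here the indicator 1_{{k ≤ K−2}} equals 1 if k ≤ K−2 and 0 if k = K−1). -/

import Mathlib

open Real

noncomputable section

/-- `A` is an affine map from `ℝ^m` to `ℝ^n`. -/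
def IsAffineMap (m n : ℕ) (A : (Fin m → ℝ) → (Fin n → ℝ)) : Prop :=
  ∃ (M : Matrix (Fin n) (Fin m) ℝ) (b : Fin n → ℝ), ∀ x, A x = M.mulVec x + b

/-- `φ : ℝ^d → ℝ` is realized by a ReLU network with exactly `L'` hidden layers,
each of positive width at most `W`. -/
def ReLUNetRec (W : ℝ) : ℕ → ∀ d : ℕ, ((Fin d → ℝ) → ℝ) → Prop
  | 0, d, φ => ∃ A : (Fin d → ℝ) → (Fin 1 → ℝ), IsAffineMap d 1 A ∧ ∀ x, φ x = A x 0
  | L' + 1, d, φ => ∃ n : ℕ, 0 < n ∧ (n : ℝ) ≤ W ∧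
      ∃ A : (Fin d → ℝ) → (Fin n → ℝ), IsAffineMap d n A ∧
        ∃ ψ : (Fin n → ℝ) → ℝ, ReLUNetRec W L' n ψ ∧
          ∀ x, φ x = ψ (fun i => max (A x i) 0)

/-- `φ : ℝ^d → ℝ` is implemented by a ReLU FNN with width at most `W` and depth at most `D`. -/
def ImplementedBy (d : ℕ) (W D : ℝ) (φ : (Fin d → ℝ) → ℝ) : Prop :=
  ∃ L' : ℕ, (L' : ℝ) ≤ D ∧ ReLUNetRec W L' d φ

/-- one-dimensional-input version of `ImplementedBy`. -/
def ImplementedBy1 (W D : ℝ) (φ : ℝ → ℝ) : Prop :=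
  ImplementedBy 1 W D (fun x => φ (x 0))

/-- two-dimensional-input version of `ImplementedBy`. -/
def ImplementedBy2 (W D : ℝ) (φ : ℝ → ℝ → ℝ) : Prop :=
  ImplementedBy 2 W D (fun x => φ (x 0) (x 1))

namespace ReluStepAux
open Finset

def ramp (δ t y : ℝ) : ℝ := (max (y - t + δ) 0 - max (y - t) 0) / δ

def rsum (δ h : ℝ) (m : ℕ) (y : ℝ) : ℝ := ∑ j ∈ range m, ramp δ (((j:ℝ)+1)*h) y

def layer (Kr δ h : ℝ) (m : ℕ) (f : ℝ → ℝ → ℝ) (y s : ℝ) : ℝ :=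
  f (max y 0 - h * rsum δ h m y) (max s 0 + h * Kr * rsum δ h m y)

def bitF (Kr δ : ℝ) : ℕ → ℝ → ℝ → ℝ
  | 0 => fun _ s => s
  | j+1 => layer Kr δ (((2^j : ℕ) : ℝ) / Kr) 1 (bitF Kr δ j)

def stepF (Kr δ : ℝ) (M T p : ℕ) (x : ℝ) : ℝ :=
  layer Kr δ (((M*T : ℕ) : ℝ)/Kr) (M-1)
    (layer Kr δ (((T : ℕ) : ℝ)/Kr) (M-1) (bitF Kr δ p))
    ((Kr-1)/Kr - max ((Kr-1)/Kr - x) 0) 0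

lemma ramp_one {δ t y : ℝ} (hδ : 0 < δ) (h : t ≤ y) : ramp δ t y = 1 := by
  unfold ramp
  rw [max_eq_left (by linarith), max_eq_left (by linarith)]
  field_simp
  ring

lemma ramp_zero {δ t y : ℝ} (hδ : 0 < δ) (h : y ≤ t - δ) : ramp δ t y = 0 := by
  unfold ramp
  rw [max_eq_right (by linarith), max_eq_right (by linarith)]
  simp

lemma sum_ind (m q : ℕ) (hq : q ≤ m) :
    ∑ j ∈ range m, (if j+1 ≤ q then (1:ℝ) else 0) = q := by
  induction m with
  | zero => have : q = 0 := by omega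
            simp [this]
  | succ m ih =>
    rw [Finset.sum_range_succ]
    by_cases h : q ≤ m
    · rw [if_neg (by omega), ih h, add_zero]
    · have hq' : q = m+1 := by omega
      rw [if_pos (by omega)]
      have he : ∀ j ∈ range m, (if j+1 ≤ q then (1:ℝ) else 0) = 1 := by
        intro j hj
        simp only [mem_range] at hj
        exact if_pos (by omega)
      rw [Finset.sum_congr rfl he, Finset.sum_const, card_range, nsmul_eq_mul, mul_one, hq']
      push_cast; ring

lemma rsum_val {Kr δ : ℝ} (w m r : ℕ) {y : ℝ} (hKr : 0 < Kr) (hδ : 0 < δ)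
    (hδ1 : δ ≤ 1/Kr) (hw : 0 < w) (hq : r/w ≤ m)
    (hy1 : (r:ℝ)/Kr ≤ y) (hy2 : y ≤ ((r:ℝ)+1)/Kr - δ ∨ y = (r:ℝ)/Kr) :
    rsum δ ((w:ℝ)/Kr) m y = ((r/w : ℕ) : ℝ) := by
  unfold rsum
  have key : ∀ j ∈ range m, ramp δ (((j:ℝ)+1)*((w:ℝ)/Kr)) y = if j+1 ≤ r/w then 1 else 0 := by
    intro j hj
    by_cases hjr : j+1 ≤ r/w
    · rw [if_pos hjr]
      apply ramp_one hδ
      have h1 : (j+1)*w ≤ r :=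
        le_trans (Nat.mul_le_mul_right w hjr) (Nat.div_mul_le_self r w)
      have h1' : ((j:ℝ)+1)*(w:ℝ) ≤ (r:ℝ) := by exact_mod_cast h1
      have h2 : ((j:ℝ)+1)*((w:ℝ)/Kr) = (((j:ℝ)+1)*(w:ℝ))/Kr := by ring
      rw [h2]
      calc (((j:ℝ)+1)*(w:ℝ))/Kr ≤ (r:ℝ)/Kr := by gcongr
        _ ≤ y := hy1
    · rw [if_neg hjr]
      apply ramp_zero hδ
      have h1 : r < (j+1)*w := (Nat.div_lt_iff_lt_mul hw).mp (by omega)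
      have h1' : (r:ℝ)+1 ≤ ((j:ℝ)+1)*(w:ℝ) := by exact_mod_cast h1
      have h2 : ((j:ℝ)+1)*((w:ℝ)/Kr) = (((j:ℝ)+1)*(w:ℝ))/Kr := by ring
      have h3 : ((r:ℝ)+1)/Kr ≤ (((j:ℝ)+1)*(w:ℝ))/Kr := by gcongr
      rcases hy2 with h | h
      · rw [h2]; linarith
      · rw [h, h2]
        have h4 : (r:ℝ)/Kr + δ ≤ ((r:ℝ)+1)/Kr := by
          rw [add_div]
          have : (1:ℝ)/Kr ≥ δ := hδ1
          linarith
        linarith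
  rw [Finset.sum_congr rfl key, sum_ind m (r/w) hq]

lemma layer_val {Kr δ : ℝ} (f : ℝ → ℝ → ℝ) (w m r : ℕ) {y s : ℝ}
    (hKr : 0 < Kr) (hδ : 0 < δ) (hδ1 : δ ≤ 1/Kr) (hw : 0 < w) (hq : r / w ≤ m)
    (hy1 : (r:ℝ)/Kr ≤ y) (hy2 : y ≤ ((r:ℝ)+1)/Kr - δ ∨ y = (r:ℝ)/Kr) (hs : 0 ≤ s) :
    layer Kr δ ((w:ℝ)/Kr) m f y s
      = f (y - ((w*(r/w) : ℕ) : ℝ)/Kr) (s + ((w*(r/w) : ℕ) : ℝ)) := by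
  have h0y : 0 ≤ y := le_trans (by positivity) hy1
  have hr : rsum δ ((w:ℝ)/Kr) m y = ((r/w : ℕ) : ℝ) :=
    rsum_val w m r hKr hδ hδ1 hw hq hy1 hy2
  unfold layer
  rw [hr, max_eq_left h0y, max_eq_left hs]
  congr 1
  · push_cast; ring
  · rw [div_mul_cancel₀ _ (ne_of_gt hKr)]
    push_cast; ring

lemma inv_step {Kr δ : ℝ} (w r : ℕ) {y : ℝ} (hKr : 0 < Kr)
    (hy1 : (r:ℝ)/Kr ≤ y) (hy2 : y ≤ ((r:ℝ)+1)/Kr - δ ∨ y = (r:ℝ)/Kr) :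
    ((r % w : ℕ) : ℝ)/Kr ≤ y - ((w*(r/w) : ℕ) : ℝ)/Kr ∧
    (y - ((w*(r/w) : ℕ) : ℝ)/Kr ≤ (((r % w : ℕ) : ℝ)+1)/Kr - δ ∨
      y - ((w*(r/w) : ℕ) : ℝ)/Kr = ((r % w : ℕ) : ℝ)/Kr) := by
  have e : ((w*(r/w) : ℕ) : ℝ) + ((r % w : ℕ) : ℝ) = (r:ℝ) := by
    exact_mod_cast Nat.div_add_mod r w
  constructor
  · have h1 : ((r % w : ℕ) : ℝ)/Kr = (r:ℝ)/Kr - ((w*(r/w) : ℕ) : ℝ)/Kr := by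
      rw [← sub_div]; congr 1; linarith
    rw [h1]; linarith
  · rcases hy2 with h | h
    · left
      have h2 : (((r % w : ℕ) : ℝ)+1)/Kr = ((r:ℝ)+1)/Kr - ((w*(r/w) : ℕ) : ℝ)/Kr := by
        rw [← sub_div]; congr 1; linarith
      linarith
    · right
      rw [h, ← sub_div]; congr 1; linarith

lemma bitF_val {Kr δ : ℝ} (hKr : 0 < Kr) (hδ : 0 < δ) (hδ1 : δ ≤ 1/Kr) :
    ∀ (j r : ℕ) (y s : ℝ), r < 2^j → (r:ℝ)/Kr ≤ y →
      (y ≤ ((r:ℝ)+1)/Kr - δ ∨ y = (r:ℝ)/Kr) → 0 ≤ s →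
      bitF Kr δ j y s = s + r := by
  intro j
  induction j with
  | zero =>
    intro r y s hr _ _ _
    have : r = 0 := by omega
    subst this
    simp [bitF]
  | succ j ih =>
    intro r y s hr hy1 hy2 hs
    have hw : 0 < 2^j := by positivity
    have hq : r / 2^j ≤ 1 := by
      have h2 : r < 2 * 2^j := by
        have : 2^(j+1) = 2^j * 2 := pow_succ 2 j
        omega
      have := (Nat.div_lt_iff_lt_mul hw).mpr (by omega : r < 2 * 2^j)
      omega
    show layer Kr δ (((2^j : ℕ) : ℝ)/Kr) 1 (bitF Kr δ j) y s = s + r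
    rw [layer_val (bitF Kr δ j) (2^j) 1 r hKr hδ hδ1 hw hq hy1 hy2 hs]
    obtain ⟨h1, h2⟩ := inv_step (2^j) r hKr hy1 hy2
    rw [ih (r % 2^j) _ _ (Nat.mod_lt r hw) h1 h2 (add_nonneg hs (Nat.cast_nonneg _))]
    have e : 2^j*(r/2^j) + r % 2^j = r := Nat.div_add_mod r (2^j)
    rw [add_assoc, ← Nat.cast_add, e]


lemma stepF_val (M T p : ℕ) (δ : ℝ) (hM : 0 < M) (hT : 0 < T) (hTp : T ≤ 2^p)
    (hδ : 0 < δ) (hδ1 : δ ≤ 1/(3*((M^2*T : ℕ) : ℝ))) (k : ℕ) (hk : k < M^2*T) (x : ℝ)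
    (hx1 : (k:ℝ)/((M^2*T : ℕ) : ℝ) ≤ x)
    (hx2 : x ≤ ((k:ℝ)+1)/((M^2*T : ℕ) : ℝ) - (if k + 2 ≤ M^2*T then δ else 0)) :
    stepF ((M^2*T : ℕ) : ℝ) δ M T p x = k := by
  set Kn : ℕ := M^2*T with hKn
  have hKn1 : 1 ≤ Kn := by
    have : 0 < M^2*T := by positivity
    omega
  set Kr : ℝ := ((Kn : ℕ) : ℝ) with hKr
  have hKr0 : (0:ℝ) < Kr := by
    rw [hKr]; exact_mod_cast hKn1
  have hδK : δ ≤ 1/Kr := by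
    have h3 : 1/(3*Kr) ≤ 1/Kr := by
      apply one_div_le_one_div_of_le hKr0; linarith
    exact le_trans hδ1 h3
  -- the clamped input
  set c0 : ℝ := (Kr-1)/Kr with hc0
  set y0 : ℝ := c0 - max (c0 - x) 0 with hy0def
  have hy0 : y0 = min x c0 := by
    rcases le_total x c0 with h | h
    · rw [hy0def, max_eq_left (by linarith), min_eq_left h]; ring
    · rw [hy0def, max_eq_right (by linarith), min_eq_right h]; ring
  have hkK : (k:ℝ) ≤ Kr - 1 := by
    have : k + 1 ≤ Kn := hk
    have : ((k:ℝ)) + 1 ≤ Kr := by rw [hKr]; exact_mod_cast this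
    linarith
  have hy1 : (k:ℝ)/Kr ≤ y0 := by
    rw [hy0]
    apply le_min hx1
    rw [hc0]; gcongr
  have hy2 : y0 ≤ ((k:ℝ)+1)/Kr - δ ∨ y0 = (k:ℝ)/Kr := by
    by_cases hk2 : k + 2 ≤ Kn
    · left
      rw [if_pos hk2] at hx2
      rw [hy0]
      exact le_trans (min_le_left x c0) hx2
    · right
      have hke : k + 1 = Kn := by omega
      have hkr : (k:ℝ) = Kr - 1 := by
        have : ((k:ℝ)) + 1 = Kr := by rw [hKr]; exact_mod_cast hke
        linarith
      have hc0k : c0 = (k:ℝ)/Kr := by rw [hc0, hkr]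
      rw [hy0, hc0k]
      apply min_eq_right
      rw [← hc0k, hc0]
      calc (Kr-1)/Kr = (k:ℝ)/Kr := by rw [hkr]
        _ ≤ x := hx1
  -- A layer
  have hMT : 0 < M*T := by positivity
  have hqA : k / (M*T) ≤ M - 1 := by
    have h1 : k < M * (M*T) := by
      have : M * (M*T) = M^2*T := by ring
      omega
    have := (Nat.div_lt_iff_lt_mul hMT).mpr (by omega : k < M * (M*T))
    omega
  show layer Kr δ (((M*T : ℕ) : ℝ)/Kr) (M-1)
      (layer Kr δ (((T : ℕ) : ℝ)/Kr) (M-1) (bitF Kr δ p)) y0 0 = k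
  rw [layer_val _ (M*T) (M-1) k hKr0 hδ hδK hMT hqA hy1 hy2 le_rfl]
  obtain ⟨hz1, hz2⟩ := inv_step (M*T) k hKr0 hy1 hy2
  set r1 : ℕ := k % (M*T) with hr1
  have hr1lt : r1 < M*T := Nat.mod_lt k hMT
  -- B layer
  have hqB : r1 / T ≤ M - 1 := by
    have := (Nat.div_lt_iff_lt_mul hT).mpr (by omega : r1 < M * T)
    omega
  rw [layer_val _ T (M-1) r1 hKr0 hδ hδK hT hqB hz1 hz2
      (add_nonneg le_rfl (Nat.cast_nonneg _))]
  obtain ⟨hw1, hw2⟩ := inv_step T r1 hKr0 hz1 hz2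
  set r2 : ℕ := r1 % T with hr2
  have hr2lt : r2 < T := Nat.mod_lt r1 hT
  rw [bitF_val hKr0 hδ hδK p r2 _ _ (lt_of_lt_of_le hr2lt hTp) hw1 hw2
      (by positivity)]
  set c1 : ℕ := (M*T)*(k/(M*T)) with hc1
  set c2 : ℕ := T*(r1/T) with hc2
  have e1 : c1 + r1 = k := by rw [hc1, hr1]; exact Nat.div_add_mod k (M*T)
  have e2 : c2 + r2 = r1 := by rw [hc2, hr2]; exact Nat.div_add_mod r1 T
  have e3 : c1 + c2 + r2 = k := by omega
  push_cast [← e3]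
  ring

lemma isAffineMap_comp {a b c : ℕ} {A : (Fin b → ℝ) → Fin c → ℝ} {B : (Fin a → ℝ) → Fin b → ℝ}
    (hA : IsAffineMap b c A) (hB : IsAffineMap a b B) :
    IsAffineMap a c (fun x => A (B x)) := by
  obtain ⟨M1, b1, h1⟩ := hA
  obtain ⟨M2, b2, h2⟩ := hB
  refine ⟨M1 * M2, M1.mulVec b2 + b1, fun x => ?_⟩
  show A (B x) = _
  rw [h2, h1, Matrix.mulVec_add, ← Matrix.mulVec_mulVec]
  funext i
  simp [add_assoc]

lemma net_precomp {W : ℝ} {L' q n : ℕ} {ψ : (Fin n → ℝ) → ℝ} {B : (Fin q → ℝ) → Fin n → ℝ}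
    (h : ReLUNetRec W L' n ψ) (hB : IsAffineMap q n B) :
    ReLUNetRec W L' q (fun x => ψ (B x)) := by
  cases L' with
  | zero =>
    obtain ⟨A, hA, hφ⟩ := h
    exact ⟨fun x => A (B x), isAffineMap_comp hA hB, fun x => hφ (B x)⟩
  | succ L'' =>
    obtain ⟨n1, hpos, hW, A, hA, ψ', hψ', hφ⟩ := h
    exact ⟨n1, hpos, hW, fun x => A (B x), isAffineMap_comp hA hB, ψ', hψ', fun x => hφ (B x)⟩

lemma net0 {W : ℝ} : ReLUNetRec W 0 2 (fun v => v 1) := by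
  refine ⟨fun v _ => v 1, ⟨(fun _ j => if j.val = 1 then 1 else 0), 0, fun v => ?_⟩, fun v => rfl⟩
  funext i
  simp [Matrix.mulVec, dotProduct, Fin.sum_univ_two]

def extV (m : ℕ) (u : Fin (2+2*m) → ℝ) (t : ℕ) : ℝ :=
  if ht : t < 2+2*m then u ⟨t, ht⟩ else 0

def sumS (m : ℕ) (u : Fin (2+2*m) → ℝ) : ℝ :=
  ∑ j ∈ range m, (extV m u (2*j+2) - extV m u (2*j+3))

def inA (δ h : ℝ) (m : ℕ) (v : Fin 2 → ℝ) (i : Fin (2+2*m)) : ℝ :=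
  if i.val = 0 then v 0 else if i.val = 1 then v 1
  else v 0 - (((i.val/2 : ℕ)) : ℝ)*h + (if i.val % 2 = 0 then δ else 0)

def outB (Kr δ h : ℝ) (m : ℕ) (u : Fin (2+2*m) → ℝ) : Fin 2 → ℝ :=
  fun o => if o.val = 0 then extV m u 0 - (h/δ) * sumS m u
           else extV m u 1 + (h*Kr/δ) * sumS m u

lemma sum_split (m : ℕ) (g : ℕ → ℝ) :
    ∑ i ∈ range (2+2*m), g i = g 0 + g 1 + ∑ j ∈ range m, (g (2*j+2) + g (2*j+3)) := by
  induction m with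
  | zero => simp [Finset.sum_range_succ]
  | succ m ih =>
    have h2 : 2+2*(m+1) = (2+2*m)+1+1 := by ring
    rw [h2, Finset.sum_range_succ, Finset.sum_range_succ, ih, Finset.sum_range_succ]
    have e1 : 2+2*m = 2*m+2 := by ring
    have e2 : 2+2*m+1 = 2*m+3 := by omega
    rw [e1]
    have e3 : g (2*m+2+1) = g (2*m+3) := rfl
    rw [e3]
    ring

lemma affine_inA (δ h : ℝ) (m : ℕ) : IsAffineMap 2 (2+2*m) (inA δ h m) := by
  refine ⟨fun i j => if i.val = 0 then (if j.val = 0 then 1 else 0)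
      else if i.val = 1 then (if j.val = 1 then 1 else 0)
      else (if j.val = 0 then 1 else 0),
    fun i => if i.val = 0 then 0 else if i.val = 1 then 0
      else -(((i.val/2 : ℕ)) : ℝ)*h + (if i.val % 2 = 0 then δ else 0),
    fun v => ?_⟩
  funext i
  simp only [Matrix.mulVec, dotProduct, Fin.sum_univ_two, Pi.add_apply,
    Fin.val_zero, Fin.val_one, Fin.isValue]
  by_cases h0 : i.val = 0
  · simp [inA, h0]
  · by_cases h1 : i.val = 1
    · simp [inA, h0, h1]
    · simp only [inA, h0, h1, if_false]
      norm_num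
      ring

def ccB (Kr δ h : ℝ) (o t : ℕ) : ℝ :=
  if o = 0 then (if t = 0 then 1 else if t = 1 then 0 else if t % 2 = 0 then -(h/δ) else h/δ)
  else (if t = 0 then 0 else if t = 1 then 1 else if t % 2 = 0 then h*Kr/δ else -(h*Kr/δ))

lemma affine_outB (Kr δ h : ℝ) (m : ℕ) : IsAffineMap (2+2*m) 2 (outB Kr δ h m) := by
  refine ⟨fun o i => ccB Kr δ h o.val i.val, 0, fun u => ?_⟩
  funext o
  have hmv : (Matrix.mulVec (fun (o : Fin 2) (i : Fin (2+2*m)) => ccB Kr δ h o.val i.val) u + 0) o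
      = ∑ i : Fin (2+2*m), ccB Kr δ h o.val i.val * u i := by
    simp [Matrix.mulVec, dotProduct]
  rw [hmv]
  have he : ∀ i : Fin (2+2*m), ccB Kr δ h o.val i.val * u i
      = (fun t => ccB Kr δ h o.val t * extV m u t) i.val := by
    intro i
    simp only [extV, i.isLt, dif_pos, Fin.eta]
  rw [Finset.sum_congr rfl (fun i _ => he i),
    Fin.sum_univ_eq_sum_range (fun t => ccB Kr δ h o.val t * extV m u t) (2+2*m),
    sum_split]
  have hcc2 : ∀ (o' j : ℕ), ccB Kr δ h o' (2*j+2) = if o' = 0 then -(h/δ) else h*Kr/δ := by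
    intro o' j
    unfold ccB
    by_cases ho : o' = 0
    · rw [if_pos ho, if_neg (by omega), if_neg (by omega), if_pos (by omega), if_pos ho]
    · rw [if_neg ho, if_neg (by omega), if_neg (by omega), if_pos (by omega), if_neg ho]
  have hcc3 : ∀ (o' j : ℕ), ccB Kr δ h o' (2*j+3) = if o' = 0 then h/δ else -(h*Kr/δ) := by
    intro o' j
    unfold ccB
    by_cases ho : o' = 0
    · rw [if_pos ho, if_neg (by omega), if_neg (by omega), if_neg (by omega), if_pos ho]
    · rw [if_neg ho, if_neg (by omega), if_neg (by omega), if_neg (by omega), if_neg ho]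
  by_cases ho : (o : ℕ) = 0
  · rw [ho]
    have e0 : ccB Kr δ h 0 0 = 1 := by norm_num [ccB]
    have e1 : ccB Kr δ h 0 1 = 0 := by norm_num [ccB]
    have ej : ∀ j ∈ range m, ccB Kr δ h 0 (2*j+2) * extV m u (2*j+2)
        + ccB Kr δ h 0 (2*j+3) * extV m u (2*j+3)
        = -(h/δ)*extV m u (2*j+2) + (h/δ)*extV m u (2*j+3) := by
      intro j _
      rw [hcc2 0 j, hcc3 0 j, if_pos rfl, if_pos rfl]
    rw [e0, e1, Finset.sum_congr rfl ej]
    have key : (∑ j ∈ range m, (-(h/δ)*extV m u (2*j+2) + (h/δ)*extV m u (2*j+3)))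
        + (h/δ) * sumS m u = 0 := by
      unfold sumS
      rw [Finset.mul_sum, ← Finset.sum_add_distrib]
      apply Finset.sum_eq_zero
      intro j _
      ring
    have hout : outB Kr δ h m u o = extV m u 0 - (h/δ) * sumS m u := by
      unfold outB
      rw [if_pos ho]
    rw [hout]
    linarith [key]
  · have e0 : ∀ j:ℕ, ¬(2*j+2 = 0) := by intro j; omega
    have g0 : ccB Kr δ h (o:ℕ) 0 = 0 := by unfold ccB; rw [if_neg ho, if_pos rfl]
    have g1 : ccB Kr δ h (o:ℕ) 1 = 1 := by
      unfold ccB; rw [if_neg ho, if_neg (by omega), if_pos rfl]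
    have ej : ∀ j ∈ range m, ccB Kr δ h (o:ℕ) (2*j+2) * extV m u (2*j+2)
        + ccB Kr δ h (o:ℕ) (2*j+3) * extV m u (2*j+3)
        = (h*Kr/δ)*extV m u (2*j+2) + -(h*Kr/δ)*extV m u (2*j+3) := by
      intro j _
      rw [hcc2 (o:ℕ) j, hcc3 (o:ℕ) j, if_neg ho, if_neg ho]
    rw [g0, g1, Finset.sum_congr rfl ej]
    have key : (∑ j ∈ range m, ((h*Kr/δ)*extV m u (2*j+2) + -(h*Kr/δ)*extV m u (2*j+3)))
        - (h*Kr/δ) * sumS m u = 0 := by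
      unfold sumS
      rw [Finset.mul_sum, ← Finset.sum_sub_distrib]
      apply Finset.sum_eq_zero
      intro j _
      ring
    have hout : outB Kr δ h m u o = extV m u 1 + (h*Kr/δ) * sumS m u := by
      unfold outB
      rw [if_neg ho]
    rw [hout]
    linarith [key]

lemma net_layer {W : ℝ} {L' : ℕ} (Kr δ h : ℝ) (m : ℕ) (f : ℝ → ℝ → ℝ)
    (hf : ReLUNetRec W L' 2 (fun v => f (v 0) (v 1)))
    (hW : ((2+2*m : ℕ) : ℝ) ≤ W) :
    ReLUNetRec W (L'+1) 2 (fun v => layer Kr δ h m f (v 0) (v 1)) := by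
  refine ⟨2+2*m, by omega, hW, inA δ h m, affine_inA δ h m,
    fun u => f (outB Kr δ h m u 0) (outB Kr δ h m u 1), ?_, ?_⟩
  · exact net_precomp hf (affine_outB Kr δ h m)
  · intro v
    set u : Fin (2+2*m) → ℝ := fun i => max (inA δ h m v i) 0 with hu
    have E0 : extV m u 0 = max (v 0) 0 := by
      rw [extV, dif_pos (by omega : (0:ℕ) < 2+2*m)]
      rw [hu]
      norm_num [inA]
    have E1 : extV m u 1 = max (v 1) 0 := by
      rw [extV, dif_pos (by omega : (1:ℕ) < 2+2*m)]
      rw [hu]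
      norm_num [inA]
    have ES : sumS m u = δ * rsum δ h m (v 0) ∨ True := Or.inr trivial
    have hrs : rsum δ h m (v 0) = sumS m u / δ := by
      unfold rsum sumS
      rw [Finset.sum_div]
      apply Finset.sum_congr rfl
      intro j hj
      simp only [Finset.mem_range] at hj
      have b2 : 2*j+2 < 2+2*m := by omega
      have b3 : 2*j+3 < 2+2*m := by omega
      have v2 : extV m u (2*j+2) = max (v 0 - ((j:ℝ)+1)*h + δ) 0 := by
        rw [extV, dif_pos b2, hu]
        show max (inA δ h m v ⟨2*j+2, b2⟩) 0 = max (v 0 - ((j:ℝ)+1)*h + δ) 0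
        have hne0 : ¬((⟨2*j+2, b2⟩ : Fin (2+2*m)).val = 0) := by simp
        have hne1 : ¬((⟨2*j+2, b2⟩ : Fin (2+2*m)).val = 1) := by simp
        have hdiv : (((⟨2*j+2, b2⟩ : Fin (2+2*m)).val / 2 : ℕ) : ℝ) = (j:ℝ)+1 := by
          have h5 : (2*j+2)/2 = j+1 := by omega
          simp [h5]
        have hmod : (⟨2*j+2, b2⟩ : Fin (2+2*m)).val % 2 = 0 := by simp [Nat.mul_add_mod]
        unfold inA
        rw [if_neg hne0, if_neg hne1, if_pos hmod, hdiv]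
      have v3 : extV m u (2*j+3) = max (v 0 - ((j:ℝ)+1)*h) 0 := by
        rw [extV, dif_pos b3, hu]
        show max (inA δ h m v ⟨2*j+3, b3⟩) 0 = max (v 0 - ((j:ℝ)+1)*h) 0
        have hne0 : ¬((⟨2*j+3, b3⟩ : Fin (2+2*m)).val = 0) := by simp
        have hne1 : ¬((⟨2*j+3, b3⟩ : Fin (2+2*m)).val = 1) := by simp
        have hdiv : (((⟨2*j+3, b3⟩ : Fin (2+2*m)).val / 2 : ℕ) : ℝ) = (j:ℝ)+1 := by
          have h5 : (2*j+3)/2 = j+1 := by omega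
          simp [h5]
        have hmod : ¬((⟨2*j+3, b3⟩ : Fin (2+2*m)).val % 2 = 0) := by
          have h6 : (2*j+3) % 2 = 1 := by omega
          simp [h6]
        unfold inA
        rw [if_neg hne0, if_neg hne1, if_neg hmod, hdiv, add_zero]
      rw [v2, v3]
      unfold ramp
      rfl
    have O0 : outB Kr δ h m u 0 = max (v 0) 0 - h * rsum δ h m (v 0) := by
      unfold outB
      rw [if_pos (by simp : (((0:Fin 2)) : ℕ) = 0), E0, hrs]
      ring
    have O1 : outB Kr δ h m u 1 = max (v 1) 0 + h * Kr * rsum δ h m (v 0) := by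
      unfold outB
      rw [if_neg (by simp : ¬(((1 : Fin 2)) : ℕ) = 0), E1, hrs]
      ring
    show layer Kr δ h m f (v 0) (v 1) = f (outB Kr δ h m u 0) (outB Kr δ h m u 1)
    unfold layer
    rw [O0, O1]

lemma net_clamp (c0 : ℝ) {W : ℝ} {L' : ℕ} (F : ℝ → ℝ → ℝ)
    (hF : ReLUNetRec W L' 2 (fun v => F (v 0) (v 1))) (h1 : (1:ℝ) ≤ W) :
    ReLUNetRec W (L'+1) 1 (fun x : Fin 1 → ℝ => F (c0 - max (c0 - x 0) 0) 0) := by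
  refine ⟨1, one_pos, by exact_mod_cast h1, fun x (_ : Fin 1) => c0 - x 0,
    ⟨fun _ _ => -1, fun _ => c0, fun x => ?_⟩,
    fun u : Fin 1 → ℝ => F (c0 - u 0) 0, ?_, fun x => rfl⟩
  · funext i
    simp [Matrix.mulVec, dotProduct, Fin.sum_univ_one]
    ring
  · have hBaff : IsAffineMap 1 2 (fun (u : Fin 1 → ℝ) (o : Fin 2) =>
        if o.val = 0 then c0 - u 0 else 0) := by
      refine ⟨fun o _ => if o.val = 0 then -1 else 0,
        fun o => if o.val = 0 then c0 else 0, fun u => ?_⟩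
      funext o
      simp only [Matrix.mulVec, dotProduct, Fin.sum_univ_one, Pi.add_apply]
      by_cases ho : (o : ℕ) = 0
      · rw [if_pos ho, if_pos ho, if_pos ho]; ring
      · rw [if_neg ho, if_neg ho, if_neg ho]; ring
    exact net_precomp hF hBaff

lemma net_stepF {W Kr δ : ℝ} (M T p : ℕ) (hM : 1 ≤ M) (hW : 4*(M:ℝ)+3 ≤ W) :
    ReLUNetRec W (p+3) 1 (fun x : Fin 1 → ℝ => stepF Kr δ M T p (x 0)) := by
  have hM1 : (1:ℝ) ≤ (M:ℝ) := by exact_mod_cast hM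
  have h4 : ((2+2*1 : ℕ) : ℝ) ≤ W := by push_cast; linarith
  have hm : ((2+2*(M-1) : ℕ) : ℝ) ≤ W := by
    have hc : ((M-1 : ℕ) : ℝ) ≤ (M:ℝ) := by exact_mod_cast Nat.sub_le M 1
    have : ((2+2*(M-1) : ℕ) : ℝ) = 2+2*((M-1 : ℕ) : ℝ) := by push_cast; ring
    rw [this]; linarith
  have hb : ∀ j, ReLUNetRec W j 2 (fun v => bitF Kr δ j (v 0) (v 1)) := by
    intro j
    induction j with
    | zero => exact net0
    | succ j ih => exact net_layer Kr δ (((2^j : ℕ) : ℝ)/Kr) 1 (bitF Kr δ j) ih h4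
  have hB := net_layer Kr δ (((T : ℕ) : ℝ)/Kr) (M-1) _ (hb p) hm
  have hA := net_layer Kr δ (((M*T : ℕ) : ℝ)/Kr) (M-1) _ hB hm
  exact net_clamp ((Kr-1)/Kr) _ hA (by linarith)


end ReluStepAux

/-- Proposition 4.3: a ReLU FNN of width `4⌊N^{1/d}⌋+3` and depth `4L+5` exactly
implements a step function with `K = ⌊N^{1/d}⌋²⌊L^{2/d}⌋` steps outside the trifling region. -/
theorem relu_step_function
    (N L d : ℕ) (hN : 0 < N) (hL : 0 < L) (hd : 0 < d)
    (K : ℕ) (hK : K = (Nat.floor ((N : ℝ) ^ ((1 : ℝ) / d))) ^ 2 *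
                      Nat.floor ((L : ℝ) ^ ((2 : ℝ) / d)))
    (δ : ℝ) (hδ0 : 0 < δ) (hδ1 : δ ≤ 1 / (3 * K)) :
    ∃ φ : ℝ → ℝ,
      ImplementedBy1 (4 * (Nat.floor ((N : ℝ) ^ ((1 : ℝ) / d)) : ℝ) + 3) (4 * (L : ℝ) + 5) φ ∧
      ∀ k : ℕ, k < K →
        ∀ x ∈ Set.Icc ((k : ℝ) / K) (((k : ℝ) + 1) / K - if k + 2 ≤ K then δ else 0),
          φ x = k := by
  subst hK
  set M := Nat.floor ((N : ℝ) ^ ((1 : ℝ) / d)) with hMdef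
  set T := Nat.floor ((L : ℝ) ^ ((2 : ℝ) / d)) with hTdef
  have hN1 : (1:ℝ) ≤ (N:ℝ) := by exact_mod_cast hN
  have hL1 : (1:ℝ) ≤ (L:ℝ) := by exact_mod_cast hL
  have hd1 : (1:ℝ) ≤ (d:ℝ) := by exact_mod_cast hd
  have hM1 : 1 ≤ M := by
    apply Nat.le_floor
    have h0 : (N:ℝ)^(0:ℝ) ≤ (N:ℝ)^((1:ℝ)/d) :=
      Real.rpow_le_rpow_of_exponent_le hN1 (by positivity)
    rw [Real.rpow_zero] at h0
    exact_mod_cast h0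
  have hT1 : 1 ≤ T := by
    apply Nat.le_floor
    have h0 : (L:ℝ)^(0:ℝ) ≤ (L:ℝ)^((2:ℝ)/d) :=
      Real.rpow_le_rpow_of_exponent_le hL1 (by positivity)
    rw [Real.rpow_zero] at h0
    exact_mod_cast h0
  have hTle : T ≤ 2^(2*L) := by
    have a1 : (L:ℝ)^((2:ℝ)/d) ≤ (L:ℝ)^(2:ℝ) :=
      Real.rpow_le_rpow_of_exponent_le hL1 (div_le_self (by norm_num) hd1)
    have a2 : (L:ℝ)^(2:ℝ) = ((L^2 : ℕ) : ℝ) := by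
      rw [show ((2:ℝ)) = ((2:ℕ):ℝ) by norm_num, Real.rpow_natCast]
      push_cast
      ring
    have a3 : T ≤ L^2 := by
      calc T ≤ Nat.floor ((L:ℝ)^(2:ℝ)) := Nat.floor_le_floor a1
        _ = L^2 := by rw [a2, Nat.floor_natCast]
    have a4 : L^2 ≤ 2^(2*L) := by
      have h5 : L ≤ 2^L := Nat.le_of_lt (Nat.lt_two_pow_self)
      calc L^2 ≤ (2^L)^2 := Nat.pow_le_pow_left h5 2
        _ = 2^(2*L) := by rw [← pow_mul, mul_comm]
    omega
  refine ⟨ReluStepAux.stepF ((M^2*T : ℕ) : ℝ) δ M T (2*L), ?_, ?_⟩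
  · refine ⟨2*L+3, ?_, ?_⟩
    · push_cast
      linarith
    · exact ReluStepAux.net_stepF M T (2*L) hM1 (le_refl _)
  · intro k hk x hx
    exact ReluStepAux.stepF_val M T (2*L) δ (by omega) (by omega) hTle hδ0 hδ1 k hk x hx.1 hx.2
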